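/- arXiv:1001.0824 — 6 statements merged into one kernel-verified Lean document; each statement's English description precedes it below -/
import Mathlib

section
/- Let G = (V,E) be a finite undirected unweighted graph and let r, x, w, y ∈ V. Suppose that δ(w,y,x) = δ(w,y) (i.e., some shortest w–y path in G avoids x) and that δ(w,y) ≤ δ(r,y). Then δ(r,w,x) + δ(w,y) ≤ 3·δ(r,y,x) (as an inequality in ℕ∞). -/
open scoped ENNReal Classical

/-- The graph `G` with vertex `x` "failed": edges incident to `x` are removed,
so that walks in `G.avoid x` are exactly walks of `G` avoiding `x`
(for endpoints different from `x`). -/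
def SimpleGraph.avoid {V : Type*} (G : SimpleGraph V) (x : V) : SimpleGraph V where
  Adj a b := G.Adj a b ∧ a ≠ x ∧ b ≠ x
  symm := ⟨fun _ _ h => ⟨h.1.symm, h.2.2, h.2.1⟩⟩
  loopless := ⟨fun a h => G.loopless.irrefl a h.1⟩

/-- `δ(a,b,x)` : the distance (in `ℕ∞`) between `a` and `b` in `G − x`,
with the convention that it is `∞` if `a = x` or `b = x`. -/
noncomputable def davoid {V : Type*} (G : SimpleGraph V) (a b x : V) : ℕ∞ :=
  if a = x ∨ b = x then ⊤ else (G.avoid x).edist a b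

/-- `δ(v,B)` : distance from `v` to the set `B`. -/
noncomputable def dset {V : Type*} (G : SimpleGraph V) (v : V) (B : Set V) : ℕ∞ :=
  ⨅ w ∈ B, G.edist v w

/-- `δ(v,B,x)` : distance from `v` to the set `B` in `G − x`. -/
noncomputable def dsetAvoid {V : Type*} (G : SimpleGraph V) (v : V) (B : Set V) (x : V) : ℕ∞ :=
  ⨅ w ∈ B, davoid G v w x

/-- `Ball(v,A,B) = {w ∈ A : δ(v,w) < δ(v,B)}`. -/
def ball {V : Type*} (G : SimpleGraph V) (v : V) (A B : Set V) : Set V :=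
  {w ∈ A | G.edist v w < dset G v B}

/-- `Ball^x(v,A,B) = {w ∈ A : δ(v,w,x) < δ(v,B,x)}`. -/
def ballAvoid {V : Type*} (G : SimpleGraph V) (v : V) (A B : Set V) (x : V) : Set V :=
  {w ∈ A | davoid G v w x < dsetAvoid G v B x}

/-- `Ball^x(v,A,B,ε) = {w ∈ A : (1+ε)·δ(v,w,x) < δ(v,B,x)}`. -/
def ballTrunc {V : Type*} (G : SimpleGraph V) (v : V) (A B : Set V) (x : V) (ε : ℝ) : Set V :=
  {w ∈ A | ENNReal.ofReal (1 + ε) * (davoid G v w x : ℝ≥0∞) < (dsetAvoid G v B x : ℝ≥0∞)}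

/-- `C^x(w,A,B,ε) = {v ∈ V : (1+ε)·δ(v,w,x) < δ(v,B,x)}`. -/
def clusterTrunc {V : Type*} (G : SimpleGraph V) (w : V) (B : Set V) (x : V) (ε : ℝ) : Set V :=
  {v | ENNReal.ofReal (1 + ε) * (davoid G v w x : ℝ≥0∞) < (dsetAvoid G v B x : ℝ≥0∞)}


lemma avoid_le {V : Type*} (G : SimpleGraph V) (x : V) : G.avoid x ≤ G :=
  fun _ _ h => And.left h

lemma edist_le_davoid {V : Type*} (G : SimpleGraph V) (a b x : V) :
    G.edist a b ≤ davoid G a b x := by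
  unfold davoid
  split
  · exact le_top
  · exact SimpleGraph.edist_anti (avoid_le G x)

lemma davoid_comm {V : Type*} (G : SimpleGraph V) (a b x : V) :
    davoid G a b x = davoid G b a x := by
  unfold davoid
  simp_rw [SimpleGraph.edist_comm, or_comm]

lemma davoid_triangle {V : Type*} (G : SimpleGraph V) (a b c x : V) (hb : b ≠ x) :
    davoid G a c x ≤ davoid G a b x + davoid G b c x := by
  unfold davoid
  by_cases ha : a = x
  · simp [ha]
  by_cases hc : c = x
  · simp [hc]
  simp only [ha, hc, hb, or_self, if_false, false_or]
  exact SimpleGraph.edist_triangle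

/-- if some shortest `w`–`y` path avoids `x` (i.e. `δ(w,y,x) = δ(w,y)`)
and `δ(w,y) ≤ δ(r,y)`, then `δ(r,w,x) + δ(w,y) ≤ 3·δ(r,y,x)`. -/
theorem stmt0 {V : Type*} [Fintype V] (G : SimpleGraph V) (r x w y : V)
    (h1 : davoid G w y x = G.edist w y)
    (h2 : G.edist w y ≤ G.edist r y) :
    davoid G r w x + G.edist w y ≤ 3 * davoid G r y x := by
  by_cases hy : y = x
  · have : davoid G r y x = ⊤ := by simp [davoid, hy]
    simp [this]
  by_cases hw : w = x
  · have hwy : G.edist w y = ⊤ := by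
      rw [← h1]; simp [davoid, hw]
    have hry : G.edist r y = ⊤ := top_le_iff.mp (hwy ▸ h2)
    have : davoid G r y x = ⊤ :=
      top_le_iff.mp (hry ▸ edist_le_davoid G r y x)
    simp [this]
  have key : davoid G r w x ≤ davoid G r y x + G.edist w y := by
    calc davoid G r w x ≤ davoid G r y x + davoid G y w x :=
          davoid_triangle G r y w x hy
      _ = davoid G r y x + G.edist w y := by rw [davoid_comm G y w x, h1]
  have hle : G.edist w y ≤ davoid G r y x :=
    h2.trans (edist_le_davoid G r y x)
  calc davoid G r w x + G.edist w y
      ≤ (davoid G r y x + G.edist w y) + G.edist w y := add_le_add_left key _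
    _ ≤ (davoid G r y x + davoid G r y x) + davoid G r y x := by
        exact add_le_add (add_le_add_right hle _) hle
    _ = 3 * davoid G r y x := by ring
end

section
/- Let G = (V,E) be a finite undirected unweighted graph, let Q be a shortest path in G from r to y, and let x be an internal vertex of Q (x ≠ r, x ≠ y). Suppose r and y are connected in G−x. Then there exist vertices a and b on Q, with a appearing strictly before x and b appearing strictly after x in the order along Q from r to y, and a path p from a to b in G−x whose set of common vertices with the segment of Q from a to b is exactly {a, b}, such that the concatenation of the prefix of Q from r to a, then p, then the suffix of Q from b to y, is a path from r to y in G−x of length δ(r,y,x). -/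
open scoped ENNReal Classical

section Aux
open SimpleGraph List

variable {V : Type*} [DecidableEq V] {G : SimpleGraph V}

lemma support_split {u v w : V} (p : G.Walk v w) (h : u ∈ p.support) :
    (p.takeUntil u h).support = p.support.takeWhile (· != u) ++ [u] ∧
    (p.dropUntil u h).support = p.support.dropWhile (· != u) := by
  have hsp : p.support = (p.takeUntil u h).support ++ (p.dropUntil u h).support.tail := by
    conv_lhs => rw [← p.take_spec h]
    rw [Walk.support_append]
  have hTne : (p.takeUntil u h).support ≠ [] := by simp
  have hT : (p.takeUntil u h).support = (p.takeUntil u h).support.dropLast ++ [u] := by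
    conv_lhs => rw [← List.dropLast_append_getLast hTne]
    rw [Walk.getLast_support]
  have hu : u ∉ (p.takeUntil u h).support.dropLast := by
    have hc := p.count_support_takeUntil_eq_one h
    rw [hT, List.count_append] at hc
    simp only [List.count_singleton, beq_self_eq_true, if_pos] at hc
    intro hmem
    have := List.one_le_count_iff.mpr hmem
    omega
  have hD : (p.dropUntil u h).support = u :: (p.dropUntil u h).support.tail :=
    Walk.support_eq_cons _
  have hsp2 : p.support
      = (p.takeUntil u h).support.dropLast ++ u :: (p.dropUntil u h).support.tail := by
    rw [hsp]; conv_lhs => rw [hT]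
    simp only [List.append_assoc, List.singleton_append]
  have hpos : ∀ z ∈ (p.takeUntil u h).support.dropLast, (z != u) = true := by
    intro z hz
    simp only [bne_iff_ne, ne_eq]
    rintro rfl; exact hu hz
  constructor
  · rw [hsp2, List.takeWhile_append_of_pos hpos, List.takeWhile_cons_of_neg (by simp),
      List.append_nil, ← hT]
  · rw [hsp2, List.dropWhile_append_of_pos hpos, List.dropWhile_cons_of_neg (by simp), ← hD]

lemma indexOf_eq {α : Type*} [DecidableEq α] (l : List α) (a : α) :
    l.idxOf a = (l.takeWhile (· != a)).length := by
  induction l with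
  | nil => rfl
  | cons c l ih =>
    by_cases h : c = a
    · subst h; simp [List.idxOf_cons_self, List.takeWhile_cons_of_neg]
    · rw [List.idxOf_cons_ne _ h, List.takeWhile_cons_of_pos (by simp [h])]
      simp [ih, Nat.succ_eq_add_one]

lemma exists_first_split {α : Type*} (pred : α → Prop) [DecidablePred pred] :
    ∀ (l : List α), (∃ v ∈ l, pred v) →
      ∃ t₁ b t₂, l = t₁ ++ b :: t₂ ∧ pred b ∧ ∀ v ∈ t₁, ¬ pred v
  | [], h => by simp at h
  | a :: l, h => by
    by_cases ha : pred a
    · exact ⟨[], a, l, rfl, ha, by simp⟩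
    · obtain ⟨v, hv, hpv⟩ := h
      rcases List.mem_cons.mp hv with rfl | hv
      · exact absurd hpv ha
      obtain ⟨t₁, b, t₂, rfl, hb, ht⟩ := exists_first_split pred l ⟨v, hv, hpv⟩
      refine ⟨a :: t₁, b, t₂, rfl, hb, ?_⟩
      simpa using ⟨ha, ht⟩

lemma split_take_drop {α : Type*} [DecidableEq α] {t₁ t₂ : List α} {b : α} (hb : b ∉ t₁) :
    (t₁ ++ b :: t₂).takeWhile (· != b) = t₁ ∧ (t₁ ++ b :: t₂).dropWhile (· != b) = b :: t₂ := by
  have hpos : ∀ a ∈ t₁, (a != b) = true := by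
    intro a hza; simp only [bne_iff_ne, ne_eq]; rintro rfl; exact hb hza
  constructor
  · rw [List.takeWhile_append_of_pos hpos, List.takeWhile_cons_of_neg (by simp), List.append_nil]
  · rw [List.dropWhile_append_of_pos hpos, List.dropWhile_cons_of_neg (by simp)]

omit [DecidableEq V] in
lemma not_mem_support_avoid {x : V} :
    ∀ {a b : V} (p : (G.avoid x).Walk a b), a ≠ x → x ∉ p.support
  | _, _, Walk.nil, ha => by simp [Ne.symm ha]
  | _, _, Walk.cons h q, ha => by
    simp only [Walk.support_cons, List.mem_cons, not_or]
    exact ⟨fun e => ha e.symm, not_mem_support_avoid q h.2.2⟩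

omit [DecidableEq V] in
lemma edges_mem_avoid {x a b : V} (p : G.Walk a b) (hx : x ∉ p.support) :
    ∀ e ∈ p.edges, e ∈ (G.avoid x).edgeSet := by
  intro e he
  induction e using Sym2.ind with
  | _ u v =>
    rw [SimpleGraph.mem_edgeSet]
    refine ⟨p.edges_subset_edgeSet he, ?_, ?_⟩
    · rintro rfl; exact hx (p.fst_mem_support_of_mem_edges he)
    · rintro rfl; exact hx (p.snd_mem_support_of_mem_edges he)

omit [DecidableEq V] in
lemma edges_mem_of_avoid {x a b : V} (p : (G.avoid x).Walk a b) :
    ∀ e ∈ p.edges, e ∈ G.edgeSet := by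
  intro e he
  induction e using Sym2.ind with
  | _ u v =>
    rw [SimpleGraph.mem_edgeSet]
    exact (p.edges_subset_edgeSet he).1

end Aux

open SimpleGraph List

/-- structure of detours: if `Q` is a shortest `r`–`y` path, `x` an
internal vertex of `Q`, and `r`, `y` are connected in `G − x`, then there are
vertices `a` (strictly before `x` on `Q`) and `b` (strictly after `x` on `Q`) and a
path `p` from `a` to `b` in `G − x` meeting the segment of `Q` from `a` to `b`
exactly in `{a,b}`, such that prefix-of-`Q` ++ `p` ++ suffix-of-`Q` is a path from
`r` to `y` in `G − x` of length `δ(r,y,x)`. -/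
theorem stmt4 {V : Type*} [Fintype V] [DecidableEq V] (G : SimpleGraph V) (r y x : V)
    (Q : G.Walk r y) (hQ : Q.IsPath) (hQlen : (Q.length : ℕ∞) = G.edist r y)
    (hxQ : x ∈ Q.support) (hxr : x ≠ r) (hxy : x ≠ y)
    (hconn : (G.avoid x).Reachable r y) :
    ∃ (a b : V) (ha : a ∈ Q.support) (hb : b ∈ Q.support)
      (hab : b ∈ (Q.dropUntil a ha).support)
      (p : (G.avoid x).Walk a b),
      Q.support.idxOf a < Q.support.idxOf x ∧
      Q.support.idxOf x < Q.support.idxOf b ∧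
      p.IsPath ∧
      {z | z ∈ p.support} ∩ {z | z ∈ ((Q.dropUntil a ha).takeUntil b hab).support}
        = {a, b} ∧
      ∃ W : (G.avoid x).Walk r y, W.IsPath ∧ (W.length : ℕ∞) = davoid G r y x ∧
        W.support
          = (Q.takeUntil a ha).support ++ p.support.tail
              ++ ((Q.dropUntil b hb).support).tail := by
  classical
  set l := Q.support with hl_def
  have hnodup : l.Nodup := hQ.support_nodup
  set t := l.takeWhile (· != x) with ht_def
  set after := (Q.dropUntil x hxQ).support.tail with hafter_def
  have hd : l.dropWhile (· != x) = x :: after := by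
    rw [← (support_split Q hxQ).2]; exact Walk.support_eq_cons _
  have hl : l = t ++ x :: after := by
    rw [← hd, ht_def]; exact List.takeWhile_append_dropWhile.symm
  have hxnt : x ∉ t := fun h => by simpa using List.mem_takeWhile_imp h
  have hnodup' := hl ▸ hnodup
  rw [List.nodup_append] at hnodup'
  obtain ⟨htnodup, hxan, disj⟩ := hnodup'
  have hxna : x ∉ after := (List.nodup_cons.mp hxan).1
  have h_after_nt : ∀ z ∈ after, z ∉ t := fun z hz hzt =>
    disj _ hzt _ (List.mem_cons_of_mem _ hz) rfl
  -- r ∈ t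
  have hr_t : r ∈ t := by
    rw [ht_def, hl_def, Q.support_eq_cons,
      List.takeWhile_cons_of_pos (by simp [Ne.symm hxr])]
    exact List.mem_cons_self
  -- y ∈ after
  have hy_after : y ∈ after := by
    have h1 : l.getLast? = some y := by
      rw [List.getLast?_eq_getLast (l := l) (by rw [hl_def]; simp), Q.getLast_support]
    rw [hl, List.getLast?_append,
      List.getLast?_eq_getLast (l := x :: after) (List.cons_ne_nil _ _)] at h1
    simp only [Option.or, Option.some.injEq] at h1
    have := h1 ▸ List.getLast_mem (List.cons_ne_nil x after)
    rcases List.mem_cons.mp this with h | h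
    · exact absurd h.symm hxy
    · exact h
  -- shortest path P in G - x
  obtain ⟨P0, hP0len⟩ := hconn.exists_walk_length_eq_edist
  set P := P0.bypass with hPdef
  have hPpath : P.IsPath := P0.bypass_isPath
  have hPlen : (P.length : ℕ∞) = (G.avoid x).edist r y :=
    le_antisymm (le_trans (by exact_mod_cast P0.length_bypass_le) hP0len.le)
      (SimpleGraph.edist_le _)
  have hxP : x ∉ P.support := not_mem_support_avoid P (Ne.symm hxr)
  -- choose a : last vertex of P in t
  obtain ⟨s₁, a, s₂, hsplit, hat, hs₁⟩ :=
    exists_first_split (fun v => v ∈ t) P.support.reverse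
      ⟨r, List.mem_reverse.mpr P.start_mem_support, hr_t⟩
  have hPsupp : P.support = s₂.reverse ++ a :: s₁.reverse := by
    have h2 := congrArg List.reverse hsplit
    simpa using h2
  have haP : a ∈ P.support := by rw [hPsupp]; simp
  have hanotin : a ∉ s₂.reverse := by
    have hn := hPpath.support_nodup
    rw [hPsupp, List.nodup_append] at hn
    exact fun h => hn.2.2 _ h _ List.mem_cons_self rfl
  have hsd := split_take_drop (t₂ := s₁.reverse) hanotin
  have hP2supp : (P.dropUntil a haP).support = a :: s₁.reverse := by
    rw [(support_split P haP).2, hPsupp, hsd.2]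
  have hMa : ∀ v ∈ (P.dropUntil a haP).support, v ≠ a → v ∉ t := by
    intro v hv hva
    rw [hP2supp] at hv
    rcases List.mem_cons.mp hv with rfl | hv
    · exact absurd rfl hva
    · exact hs₁ v (List.mem_reverse.mp hv)
  have ha_Q : a ∈ l := (List.takeWhile_sublist _).subset hat
  have hax : a ≠ x := by rintro rfl; exact hxnt hat
  -- choose b : first vertex of P2 in after
  have hP2path : (P.dropUntil a haP).IsPath := hPpath.dropUntil haP
  obtain ⟨u₁, b, u₂, hsplit2, hbafter, hu₁⟩ :=
    exists_first_split (fun v => v ∈ after) (P.dropUntil a haP).support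
      ⟨y, Walk.end_mem_support _, hy_after⟩
  have hbu₁ : b ∉ u₁ := by
    have hn := hP2path.support_nodup
    rw [hsplit2, List.nodup_append] at hn
    exact fun h => hn.2.2 _ h _ List.mem_cons_self rfl
  have hbP2 : b ∈ (P.dropUntil a haP).support := by rw [hsplit2]; simp
  have hsd2 := split_take_drop (t₂ := u₂) hbu₁
  set p := (P.dropUntil a haP).takeUntil b hbP2 with hpdef
  have hpsupp : p.support = u₁ ++ [b] := by
    rw [hpdef, (support_split _ hbP2).1, hsplit2, hsd2.1]
  have hppath : p.IsPath := hP2path.takeUntil hbP2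
  have hbt : b ∉ t := fun h => disj _ h _ (List.mem_cons_of_mem _ hbafter) rfl
  have hbx : b ≠ x := by rintro rfl; exact hxna hbafter
  have hba : b ≠ a := by rintro rfl; exact disj _ hat _ (List.mem_cons_of_mem _ hbafter) rfl
  have hb_Q : b ∈ l := by
    rw [hl]; exact List.mem_append_right _ (List.mem_cons_of_mem _ hbafter)
  -- properties of p
  have hpsub : p.support ⊆ (P.dropUntil a haP).support := Walk.support_takeUntil_subset _ _
  have C1 : ∀ z ∈ p.support, z ≠ a → z ∉ t := fun z hz => hMa z (hpsub hz)
  have C2 : ∀ z ∈ p.support, z ≠ b → z ∉ after := by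
    intro z hz hzb
    rw [hpsupp] at hz
    rcases List.mem_append.mp hz with h | h
    · exact hu₁ z h
    · exact absurd (List.mem_singleton.mp h) hzb
  have C3 : x ∉ p.support := fun h => hxP (Walk.support_dropUntil_subset _ _ (hpsub h))
  -- Q-side prefix/suffix
  have hA'supp : (Q.takeUntil a ha_Q).support = l.takeWhile (· != a) ++ [a] :=
    (support_split Q ha_Q).1
  have h1len : ¬ (t.takeWhile (· != a)).length = t.length := by
    intro hlen
    have heq : t.takeWhile (· != a) = t := (List.takeWhile_sublist _).eq_of_length hlen
    have := List.mem_takeWhile_imp (x := a) (heq ▸ hat)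
    simp at this
  have htwa : l.takeWhile (· != a) = t.takeWhile (· != a) := by
    conv_lhs => rw [hl]
    rw [List.takeWhile_append, if_neg h1len]
  have hA'sub : (Q.takeUntil a ha_Q).support ⊆ t := by
    rw [hA'supp, htwa]
    intro z hz
    rcases List.mem_append.mp hz with h | h
    · exact (List.takeWhile_sublist _).subset h
    · rw [List.mem_singleton.mp h]; exact hat
  have hposT : ∀ z ∈ t, (z != b) = true := by
    intro z hz
    simp only [bne_iff_ne, ne_eq]
    rintro rfl; exact hbt hz
  have hlQ : Q.support = t ++ x :: after := by rw [← hl_def]; exact hl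
  have hB'supp : (Q.dropUntil b hb_Q).support = after.dropWhile (· != b) := by
    rw [(support_split Q hb_Q).2]
    conv_lhs => rw [hlQ]
    rw [List.dropWhile_append_of_pos hposT,
      List.dropWhile_cons_of_pos (by simp [Ne.symm hbx])]
  have hB'sub : (Q.dropUntil b hb_Q).support ⊆ after := by
    rw [hB'supp]; exact (List.dropWhile_sublist _).subset
  have hab : b ∈ (Q.dropUntil a ha_Q).support := by
    rw [(support_split Q ha_Q).2]
    have hbl : b ∈ l := hb_Q
    rw [← List.takeWhile_append_dropWhile (p := (· != a)) (l := l)] at hbl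
    rcases List.mem_append.mp hbl with h | h
    · exact absurd ((List.takeWhile_sublist _).subset (htwa ▸ h)) hbt
    · exact h
  -- index facts
  have hidx_x : l.idxOf x = t.length := by rw [indexOf_eq]
  have hidx_a : l.idxOf a < l.idxOf x := by
    rw [indexOf_eq, htwa, hidx_x]
    exact Nat.lt_of_le_of_ne (List.Sublist.length_le (List.takeWhile_sublist _)) h1len
  have hidx_b : l.idxOf x < l.idxOf b := by
    rw [indexOf_eq l b, hidx_x]
    conv_rhs => rw [hl]
    rw [List.takeWhile_append_of_pos hposT,
      List.takeWhile_cons_of_pos (by simp [Ne.symm hbx])]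
    simp
  -- the intersection property
  have hset : {z | z ∈ p.support} ∩ {z | z ∈ ((Q.dropUntil a ha_Q).takeUntil b hab).support}
      = {a, b} := by
    ext z
    simp only [Set.mem_inter_iff, Set.mem_setOf_eq, Set.mem_insert_iff,
      Set.mem_singleton_iff]
    constructor
    · rintro ⟨hzp, hzQM⟩
      by_contra hc
      push_neg at hc
      obtain ⟨hza, hzb⟩ := hc
      have hzl : z ∈ l :=
        Walk.support_dropUntil_subset _ _ (Walk.support_takeUntil_subset _ _ hzQM)
      rw [hl] at hzl
      rcases List.mem_append.mp hzl with h | h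
      · exact C1 z hzp hza h
      · rcases List.mem_cons.mp h with rfl | h
        · exact C3 hzp
        · exact C2 z hzp hzb h
    · rintro (rfl | rfl)
      · exact ⟨Walk.start_mem_support _, Walk.start_mem_support _⟩
      · exact ⟨Walk.end_mem_support _, Walk.end_mem_support _⟩
  -- construct W
  have hxA : x ∉ (Q.takeUntil a ha_Q).support := fun h => hxnt (hA'sub h)
  have hxB : x ∉ (Q.dropUntil b hb_Q).support := fun h => hxna (hB'sub h)
  have hexW : ∃ W : (G.avoid x).Walk r y,
      W.support = (Q.takeUntil a ha_Q).support ++ p.support.tail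
        ++ (Q.dropUntil b hb_Q).support.tail ∧
      W.length = (Q.takeUntil a ha_Q).length + p.length + (Q.dropUntil b hb_Q).length := by
    refine ⟨((Q.takeUntil a ha_Q).transfer (G.avoid x) (edges_mem_avoid _ hxA)).append
      (p.append ((Q.dropUntil b hb_Q).transfer (G.avoid x) (edges_mem_avoid _ hxB))), ?_, ?_⟩
    · conv_lhs => rw [Walk.support_append, Walk.support_append, p.support_eq_cons]
      rw [Walk.support_transfer, Walk.support_transfer, List.cons_append, List.tail_cons,
        ← List.append_assoc]
    · rw [Walk.length_append, Walk.length_append, Walk.length_transfer, Walk.length_transfer]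
      omega
  obtain ⟨W, hWsupp, hWlenn⟩ := hexW
  -- W is a path
  have htp : p.support.tail.Nodup ∧ a ∉ p.support.tail := by
    have h := hppath.support_nodup
    rw [p.support_eq_cons, List.nodup_cons] at h
    exact ⟨h.2, h.1⟩
  have hBt : (Q.dropUntil b hb_Q).support.tail.Nodup
      ∧ b ∉ (Q.dropUntil b hb_Q).support.tail := by
    have h := (hQ.dropUntil hb_Q).support_nodup
    rw [Walk.support_eq_cons (Q.dropUntil b hb_Q), List.nodup_cons] at h
    exact ⟨h.2, h.1⟩
  have hYprop : ∀ z ∈ p.support.tail, z ∈ p.support ∧ z ≠ a := fun z hz =>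
    ⟨List.mem_of_mem_tail hz, fun h => htp.2 (h ▸ hz)⟩
  have hZprop : ∀ z ∈ (Q.dropUntil b hb_Q).support.tail, z ∈ after ∧ z ≠ b := fun z hz =>
    ⟨hB'sub (List.mem_of_mem_tail hz), fun h => hBt.2 (h ▸ hz)⟩
  have hWpath : W.IsPath := by
    rw [Walk.isPath_def, hWsupp, List.append_assoc, List.nodup_append]
    refine ⟨(hQ.takeUntil ha_Q).support_nodup, ?_, ?_⟩
    · rw [List.nodup_append]
      refine ⟨htp.1, hBt.1, fun z hzY w hzZ hzw => ?_⟩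
      subst hzw
      exact C2 z (hYprop z hzY).1 (hZprop z hzZ).2 (hZprop z hzZ).1
    · intro z hzX w hzYZ hzw
      subst hzw
      have hzt : z ∈ t := hA'sub hzX
      rcases List.mem_append.mp hzYZ with h | h
      · exact C1 z (hYprop z h).1 (hYprop z h).2 hzt
      · exact h_after_nt z (hZprop z h).1 hzt
  -- length computations
  have hlenQa : Q.length = (Q.takeUntil a ha_Q).length + (Q.dropUntil a ha_Q).length := by
    conv_lhs => rw [← Q.take_spec ha_Q, Walk.length_append]
  have hlenQb : Q.length = (Q.takeUntil b hb_Q).length + (Q.dropUntil b hb_Q).length := by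
    conv_lhs => rw [← Q.take_spec hb_Q, Walk.length_append]
  have hlenPa : P.length = (P.takeUntil a haP).length + (P.dropUntil a haP).length := by
    conv_lhs => rw [← P.take_spec haP, Walk.length_append]
  have hlenP2b : (P.dropUntil a haP).length
      = p.length + ((P.dropUntil a haP).dropUntil b hbP2).length := by
    conv_lhs => rw [← (P.dropUntil a haP).take_spec hbP2, Walk.length_append]
  have hA'le : (Q.takeUntil a ha_Q).length ≤ (P.takeUntil a haP).length := by
    have hc := SimpleGraph.edist_le
      (((P.takeUntil a haP).transfer G (edges_mem_of_avoid _)).append (Q.dropUntil a ha_Q))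
    rw [← hQlen, Walk.length_append, Walk.length_transfer] at hc
    have hc' : Q.length ≤ (P.takeUntil a haP).length + (Q.dropUntil a ha_Q).length := by
      exact_mod_cast hc
    omega
  have hB'le : (Q.dropUntil b hb_Q).length
      ≤ ((P.dropUntil a haP).dropUntil b hbP2).length := by
    have hc := SimpleGraph.edist_le
      ((Q.takeUntil b hb_Q).append
        (((P.dropUntil a haP).dropUntil b hbP2).transfer G (edges_mem_of_avoid _)))
    rw [← hQlen, Walk.length_append, Walk.length_transfer] at hc
    have hc' : Q.length ≤ (Q.takeUntil b hb_Q).length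
        + ((P.dropUntil a haP).dropUntil b hbP2).length := by
      exact_mod_cast hc
    omega
  have hWle : W.length ≤ P.length := by omega
  have hcond : ¬(r = x ∨ y = x) := by
    push_neg
    exact ⟨Ne.symm hxr, Ne.symm hxy⟩
  have hWlen : (W.length : ℕ∞) = davoid G r y x := by
    simp only [davoid, if_neg hcond]
    refine le_antisymm ?_ (SimpleGraph.edist_le W)
    calc (W.length : ℕ∞) ≤ (P.length : ℕ∞) := by exact_mod_cast hWle
      _ = _ := hPlen
  exact ⟨a, b, ha_Q, hb_Q, hab, p, hidx_a, hidx_b, hppath, hset, W, hWpath, hWlen, hWsupp⟩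
end

section
/- Let G = (V,E) be a finite undirected unweighted graph and let v, u, w ∈ V with δ(v,w) ≥ δ(v,u). Let Q be a shortest v–u path in G on which x₁ appears strictly before x₂ (in the order along Q from v to u). If there exists a shortest v–w path in G−x₁ (a path in G−x₁ of length δ(v,w,x₁)) passing through x₂, then δ(v,w,x₁) ≥ δ(v,u,x₁). -/
open scoped ENNReal Classical

/-- A walk avoiding `x` lifts to `G.avoid x`. -/
lemma walk_avoid {V : Type*} {G : SimpleGraph V} {x a b : V} (p : G.Walk a b)
    (h : x ∉ p.support) : ∃ q : (G.avoid x).Walk a b, q.length = p.length := by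
  induction p with
  | nil => exact ⟨SimpleGraph.Walk.nil, rfl⟩
  | cons h' p ih =>
    rw [SimpleGraph.Walk.support_cons, List.mem_cons] at h
    push_neg at h
    obtain ⟨q, hq⟩ := ih h.2
    refine ⟨SimpleGraph.Walk.cons ⟨h', fun hh => h.1 hh.symm, fun hh => h.2 (hh ▸ p.start_mem_support)⟩ q, by show q.length + 1 = p.length + 1; rw [hq]⟩

/-- with `δ(v,w) ≥ δ(v,u)`, `Q` a shortest `v`–`u` path on which `x₁`
appears strictly before `x₂`, if some shortest `v`–`w` path in `G − x₁` passes
through `x₂`, then `δ(v,w,x₁) ≥ δ(v,u,x₁)`. -/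
theorem stmt8 {V : Type*} [Fintype V] [DecidableEq V] (G : SimpleGraph V) (v u w : V)
    (hd : G.edist v u ≤ G.edist v w)
    (Q : G.Walk v u) (hQ : Q.IsPath) (hQlen : (Q.length : ℕ∞) = G.edist v u)
    (x₁ x₂ : V) (hx₁ : x₁ ∈ Q.support) (hx₂ : x₂ ∈ Q.support)
    (horder : Q.support.idxOf x₁ < Q.support.idxOf x₂)
    (h : ∃ p : (G.avoid x₁).Walk v w, p.IsPath ∧ (p.length : ℕ∞) = davoid G v w x₁ ∧
      x₂ ∈ p.support) :
    davoid G v u x₁ ≤ davoid G v w x₁ := by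
  obtain ⟨p, hp, hplen, hx₂p⟩ := h
  by_cases hvw : v = x₁ ∨ w = x₁
  · rw [show davoid G v w x₁ = ⊤ from if_pos hvw]; exact le_top
  push_neg at hvw
  rw [show davoid G v w x₁ = (G.avoid x₁).edist v w from if_neg (by push_neg; exact hvw)] at hplen
  -- x₁ ≠ x₂
  have hne : x₁ ≠ x₂ := fun hh => by simp [hh] at horder
  -- split Q at x₂
  set Q1 := Q.takeUntil x₂ hx₂ with hQ1
  set Q2 := Q.dropUntil x₂ hx₂ with hQ2
  have hQspec : Q1.append Q2 = Q := Q.take_spec hx₂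
  -- x₁ not in Q2.support
  have hx₁Q2 : x₁ ∉ Q2.support := by
    intro hmem
    have hnodup : Q.support.Nodup := hQ.support_nodup
    have hsupp : Q.support = Q1.support ++ Q2.support.tail := by
      rw [← hQspec, SimpleGraph.Walk.support_append]
    -- x₁ ∈ tail of Q2.support since x₁ ≠ x₂
    have hx₁tail : x₁ ∈ Q2.support.tail := by
      have := Q2.support_eq_cons
      rw [this] at hmem
      rcases List.mem_cons.mp hmem with hh | hh
      · exact absurd hh hne
      · rw [this]; exact hh
    have hdisj : List.Disjoint Q1.support Q2.support.tail :=
      List.disjoint_of_nodup_append (hsupp ▸ hnodup)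
    have hx₁Q1 : x₁ ∉ Q1.support := fun hh => hdisj hh hx₁tail
    have hx₂Q1 : x₂ ∈ Q1.support := Q1.end_mem_support
    have h1 : Q.support.idxOf x₂ < Q1.support.length := by
      rw [hsupp, List.idxOf_append_of_mem hx₂Q1]
      exact List.idxOf_lt_length_iff.mpr hx₂Q1
    have h2 : Q1.support.length ≤ Q.support.idxOf x₁ := by
      rw [hsupp, List.idxOf_append_of_notMem hx₁Q1]
      exact Nat.le_add_right _ _
    omega
  -- hence u ≠ x₁, and Q2 lifts to avoid graph
  obtain ⟨Q2', hQ2'len⟩ := walk_avoid Q2 hx₁Q2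
  -- split p at x₂
  set p1 := p.takeUntil x₂ hx₂p with hp1
  set p2 := p.dropUntil x₂ hx₂p with hp2
  have hpspec : p1.append p2 = p := p.take_spec hx₂p
  have hplen' : p1.length + p2.length = p.length := by
    rw [← hpspec, SimpleGraph.Walk.length_append]
  have hQlen' : Q1.length + Q2.length = Q.length := by
    rw [← hQspec, SimpleGraph.Walk.length_append]
  -- distances
  have hdvx₂ : G.edist v x₂ ≤ (Q1.length : ℕ∞) := SimpleGraph.Walk.edist_le Q1
  have hfin : G.edist v x₂ ≠ ⊤ := (hdvx₂.trans_lt (by exact_mod_cast lt_top_iff_ne_top.mpr (by simp))).ne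
  -- G.edist x₂ w ≤ p2.length
  have hdx₂w : G.edist x₂ w ≤ (p2.length : ℕ∞) := by
    have := SimpleGraph.Walk.edist_le (p2.mapLe (avoid_le G x₁))
    simpa using this
  -- chain: edist v x₂ + Q2.length ≤ Q.length = edist v u ≤ edist v w ≤ edist v x₂ + p2.length
  have key : G.edist v x₂ + (Q2.length : ℕ∞) ≤ G.edist v x₂ + (p2.length : ℕ∞) := by
    calc G.edist v x₂ + (Q2.length : ℕ∞) ≤ (Q1.length : ℕ∞) + Q2.length :=
          add_le_add_left hdvx₂ _
      _ = (Q.length : ℕ∞) := by exact_mod_cast hQlen'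
      _ = G.edist v u := hQlen
      _ ≤ G.edist v w := hd
      _ ≤ G.edist v x₂ + G.edist x₂ w := G.edist_triangle
      _ ≤ G.edist v x₂ + (p2.length : ℕ∞) := add_le_add_right hdx₂w _
  have hq2l2 : (Q2.length : ℕ∞) ≤ (p2.length : ℕ∞) :=
    (WithTop.add_le_add_iff_left hfin).mp key
  -- assemble walk v → x₂ → u in avoid graph
  have hfinal : (G.avoid x₁).edist v u ≤ (p1.append Q2').length := SimpleGraph.Walk.edist_le _
  have hu : u ≠ x₁ := fun hh => hx₁Q2 (hh ▸ Q2.end_mem_support)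
  rw [show davoid G v u x₁ = (G.avoid x₁).edist v u from if_neg (by push_neg; exact ⟨hvw.1, hu⟩),
    show davoid G v w x₁ = (G.avoid x₁).edist v w from if_neg (by push_neg; exact hvw)]
  calc (G.avoid x₁).edist v u ≤ ((p1.append Q2').length : ℕ∞) := hfinal
    _ = (p1.length : ℕ∞) + Q2'.length := by rw [SimpleGraph.Walk.length_append]; push_cast; ring
    _ = (p1.length : ℕ∞) + Q2.length := by rw [hQ2'len]
    _ ≤ (p1.length : ℕ∞) + p2.length := add_le_add_right hq2l2 _
    _ = (p.length : ℕ∞) := by exact_mod_cast hplen'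
    _ = (G.avoid x₁).edist v w := hplen
end

section
/- Let G = (V,E) be a finite undirected unweighted graph, let v, w, x₁, x₂ ∈ V, let B ⊆ V, and let ε > 0 be a real number. Suppose that some shortest v–w path in G−x₁ (a path in G−x₁ of length δ(v,w,x₁)) avoids x₂, that δ(v,w,x₂) ≥ δ(v,B,x₂), and that δ(v,B,x₁) ≤ (1+ε)·δ(v,B,x₂). Then (1+ε)·δ(v,w,x₁) ≥ δ(v,B,x₁); in particular, for any A ⊆ V, w ∉ Ball^{x₁}(v,A,B,ε). -/
open scoped ENNReal Classical

lemma walk_avoid_trans {V : Type*} {G : SimpleGraph V} {x₁ x₂ a b : V}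
    (p : (G.avoid x₁).Walk a b) (h : x₂ ∉ p.support) :
    ∃ q : (G.avoid x₂).Walk a b, q.length = p.length := by
  induction p with
  | nil => exact ⟨SimpleGraph.Walk.nil, rfl⟩
  | cons hadj p ih =>
    rw [SimpleGraph.Walk.support_cons] at h
    simp only [List.mem_cons, not_or] at h
    obtain ⟨q, hq⟩ := ih h.2
    refine ⟨SimpleGraph.Walk.cons (show (G.avoid x₂).Adj _ _ from ⟨(show G.Adj _ _ ∧ _ from hadj).1, Ne.symm h.1, ?_⟩) q, by simp [hq]⟩
    intro hx
    exact h.2 (hx ▸ p.start_mem_support)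

/-- if some shortest `v`–`w` path in `G − x₁` avoids `x₂`,
`δ(v,w,x₂) ≥ δ(v,B,x₂)`, and `δ(v,B,x₁) ≤ (1+ε)·δ(v,B,x₂)`, then
`(1+ε)·δ(v,w,x₁) ≥ δ(v,B,x₁)`; in particular `w ∉ Ball^{x₁}(v,A,B,ε)` for any `A`. -/
theorem stmt9 {V : Type*} [Fintype V] (G : SimpleGraph V) (v w x₁ x₂ : V)
    (B : Set V) (ε : ℝ) (hε : 0 < ε)
    (h1 : ∃ p : (G.avoid x₁).Walk v w, p.IsPath ∧ (p.length : ℕ∞) = davoid G v w x₁ ∧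
      x₂ ∉ p.support)
    (h2 : dsetAvoid G v B x₂ ≤ davoid G v w x₂)
    (h3 : (dsetAvoid G v B x₁ : ℝ≥0∞)
      ≤ ENNReal.ofReal (1 + ε) * (dsetAvoid G v B x₂ : ℝ≥0∞)) :
    (dsetAvoid G v B x₁ : ℝ≥0∞) ≤ ENNReal.ofReal (1 + ε) * (davoid G v w x₁ : ℝ≥0∞) ∧
    ∀ A : Set V, w ∉ ballTrunc G v A B x₁ ε := by
  obtain ⟨p, hpath, hlen, hsup⟩ := h1
  have hv2 : v ≠ x₂ := fun h => hsup (h ▸ p.start_mem_support)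
  have hw2 : w ≠ x₂ := fun h => hsup (h ▸ p.end_mem_support)
  obtain ⟨q, hq⟩ := walk_avoid_trans p hsup
  have hd2 : davoid G v w x₂ ≤ davoid G v w x₁ := by
    rw [davoid, if_neg (by tauto), ← hlen, ← hq]
    exact_mod_cast q.edist_le
  have key : (dsetAvoid G v B x₁ : ℝ≥0∞)
      ≤ ENNReal.ofReal (1 + ε) * (davoid G v w x₁ : ℝ≥0∞) := by
    refine h3.trans ?_
    refine mul_le_mul_right ?_ _
    exact_mod_cast h2.trans hd2
  refine ⟨key, fun A hw => ?_⟩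
  exact absurd key (not_le.mpr hw.2)
end

section
/- Let G = (V,E) be a finite undirected unweighted graph and let v, u, w ∈ V with δ(v,w) ≥ δ(v,u). Let Q be a shortest v–u path in G on which x₁ appears strictly before x₂ (in the order along Q from v to u). Then δ(x₂,w,x₁) ≥ δ(x₂,u,x₁). -/
open scoped ENNReal Classical

/-- A walk avoiding `x` in its support yields a walk of the same length in `G.avoid x`. -/
lemma walk_to_avoid {V : Type*} {G : SimpleGraph V} {a b : V} (p : G.Walk a b) (x : V)
    (hx : x ∉ p.support) : ∃ q : (G.avoid x).Walk a b, q.length = p.length := by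
  induction p with
  | nil => exact ⟨SimpleGraph.Walk.nil, rfl⟩
  | cons h p ih =>
    rename_i u v w
    rw [SimpleGraph.Walk.support_cons, List.mem_cons] at hx
    push_neg at hx
    obtain ⟨q, hq⟩ := ih hx.2
    refine ⟨SimpleGraph.Walk.cons (show (G.avoid x).Adj u v from ⟨h, Ne.symm hx.1, ?_⟩) q, by simp [hq]⟩
    intro hvx
    exact hx.2 (hvx ▸ p.start_mem_support)

/-- with `δ(v,w) ≥ δ(v,u)` and `Q` a shortest `v`–`u` path on which
`x₁` appears strictly before `x₂`, we have `δ(x₂,w,x₁) ≥ δ(x₂,u,x₁)`. -/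
theorem stmt13 {V : Type*} [Fintype V] [DecidableEq V] (G : SimpleGraph V) (v u w : V)
    (hd : G.edist v u ≤ G.edist v w)
    (Q : G.Walk v u) (hQ : Q.IsPath) (hQlen : (Q.length : ℕ∞) = G.edist v u)
    (x₁ x₂ : V) (hx₁ : x₁ ∈ Q.support) (hx₂ : x₂ ∈ Q.support)
    (horder : Q.support.idxOf x₁ < Q.support.idxOf x₂) :
    davoid G x₂ u x₁ ≤ davoid G x₂ w x₁ := by
  set tk := Q.takeUntil x₂ hx₂ with htk
  set dr := Q.dropUntil x₂ hx₂ with hdr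
  have hspec : tk.append dr = Q := Q.take_spec hx₂
  have hsupp : Q.support = tk.support ++ dr.support.tail := by
    rw [← hspec, SimpleGraph.Walk.support_append]
  have hnodup : Q.support.Nodup := hQ.support_nodup
  -- x₁ ∈ tk.support
  have hx1tk : x₁ ∈ tk.support := by
    by_contra hmem
    have hx1tail : x₁ ∈ dr.support.tail := by
      rw [hsupp, List.mem_append] at hx₁
      tauto
    have h1 : Q.support.idxOf x₁ = tk.support.length + dr.support.tail.idxOf x₁ := by
      rw [hsupp, List.idxOf_append_of_notMem hmem]
    have hx2tk : x₂ ∈ tk.support := tk.end_mem_support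
    have h2 : Q.support.idxOf x₂ = tk.support.idxOf x₂ := by
      rw [hsupp, List.idxOf_append_of_mem hx2tk]
    have h3 : tk.support.idxOf x₂ < tk.support.length := List.idxOf_lt_length_iff.2 hx2tk
    omega
  -- x₁ ∉ dr.support
  have hne12 : x₁ ≠ x₂ := by
    rintro rfl; omega
  have hx1dr : x₁ ∉ dr.support := by
    intro hmem
    rw [dr.support_eq_cons, List.mem_cons] at hmem
    rcases hmem with h | h
    · exact hne12 h
    · have hdisj := (List.nodup_append.1 (hsupp ▸ hnodup)).2.2
      exact hdisj x₁ hx1tk x₁ h rfl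
  have hne2 : x₂ ≠ x₁ := hne12.symm
  have hneu : u ≠ x₁ := fun h => hx1dr (h ▸ dr.end_mem_support)
  -- edist v u splits
  have hlen : Q.length = tk.length + dr.length := by
    rw [← hspec, SimpleGraph.Walk.length_append]
  -- left side ≤ dr.length
  obtain ⟨q, hq⟩ := walk_to_avoid dr x₁ hx1dr
  have hleft : davoid G x₂ u x₁ ≤ (dr.length : ℕ∞) := by
    rw [davoid, if_neg (by tauto)]
    calc (G.avoid x₁).edist x₂ u ≤ q.length := q.edist_le
    _ = dr.length := by exact_mod_cast hq
  refine hleft.trans ?_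
  -- right side
  rw [davoid]
  rcases eq_or_ne w x₁ with rfl | hnew
  · rw [if_pos (Or.inr rfl)]; exact le_top
  rw [if_neg (by tauto)]
  have hmono : G.edist x₂ w ≤ (G.avoid x₁).edist x₂ w :=
    SimpleGraph.edist_anti (avoid_le G x₁)
  refine le_trans ?_ hmono
  -- triangle: edist v w ≤ tk.length + edist x₂ w
  have htri : G.edist v w ≤ (tk.length : ℕ∞) + G.edist x₂ w :=
    le_trans G.edist_triangle (add_le_add_left tk.edist_le _)
  have hvu : (tk.length : ℕ∞) + (dr.length : ℕ∞) ≤ (tk.length : ℕ∞) + G.edist x₂ w := by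
    calc (tk.length : ℕ∞) + (dr.length : ℕ∞) = (Q.length : ℕ∞) := by
          exact_mod_cast congrArg Nat.cast hlen.symm
    _ = G.edist v u := hQlen
    _ ≤ G.edist v w := hd
    _ ≤ (tk.length : ℕ∞) + G.edist x₂ w := htri
  exact (WithTop.add_le_add_iff_left (WithTop.natCast_ne_top _)).1 hvu
end

section
/- Let G = (V,E) be a finite connected undirected unweighted graph, let r ∈ V, and let T be a spanning tree of G such that for every vertex z the unique r–z path in T has length δ(r,z) (a shortest-path tree rooted at r). Let x ≠ r be a vertex and let w be a vertex adjacent to x in T whose tree path from r passes through x (a child of x). Let D = {z ∈ V : the tree path from r to z in T passes through w}, and suppose r and w are connected in G−x. Then there exists a path R from r to w in G−x of length δ(r,w,x) and a vertex c on R such that: (i) every vertex of R strictly before c lies outside D ∪ {x} and every vertex of R from c onward lies in D; and (ii) the prefix of R from r up to the last vertex before c is a shortest path between its endpoints in the subgraph of G induced on V \ (D ∪ {x}). -/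
open scoped ENNReal Classical

/-- The graph `G` with all the vertices of the set `S` "failed". -/
def SimpleGraph.avoidSet {V : Type*} (G : SimpleGraph V) (S : Set V) : SimpleGraph V where
  Adj a b := G.Adj a b ∧ a ∉ S ∧ b ∉ S
  symm := ⟨fun _ _ h => ⟨h.1.symm, h.2.2, h.2.1⟩⟩
  loopless := ⟨fun a h => G.loopless.irrefl a h.1⟩

lemma SimpleGraph.avoid_adj' {V : Type*} {G : SimpleGraph V} {x a b : V} :
    (G.avoid x).Adj a b ↔ G.Adj a b ∧ a ≠ x ∧ b ≠ x := Iff.rfl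

lemma SimpleGraph.avoidSet_adj' {V : Type*} {G : SimpleGraph V} {S : Set V} {a b : V} :
    (G.avoidSet S).Adj a b ↔ G.Adj a b ∧ a ∉ S ∧ b ∉ S := Iff.rfl

section Helpers

namespace SimpleGraph
namespace Walk
variable {V : Type*} [DecidableEq V] {G : SimpleGraph V} {u v w b : V}

lemma takeUntil_first' (p : G.Walk u v) (h : u ∈ p.support) :
    p.takeUntil u h = nil := by
  cases p with
  | nil => rfl
  | cons ha q => simp [takeUntil]

lemma takeUntil_append_left' {p : G.Walk u v} (q : G.Walk v w) (hb : b ∈ p.support)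
    (h : b ∈ (p.append q).support) :
    (p.append q).takeUntil b h = p.takeUntil b hb := by
  induction p with
  | nil =>
    rw [mem_support_nil_iff] at hb; subst hb
    simp only [nil_append] at h ⊢
    rw [takeUntil_first', takeUntil_first']
  | cons ha p' ih =>
    simp only [cons_append, takeUntil]
    split_ifs with h1
    · subst h1; rfl
    · have hb' : b ∈ p'.support := by
        rcases List.mem_cons.mp (by simpa using hb) with h2 | h2
        · exact absurd h2.symm h1
        · exact h2
      rw [ih q hb']

lemma takeUntil_end' (p : G.Walk u v) (hp : p.IsPath) (h : v ∈ p.support) :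
    p.takeUntil v h = p := by
  have hs := take_spec p h
  have hnil : p.dropUntil v h = nil :=
    isPath_iff_eq_nil.mp (hp.dropUntil h)
  rw [hnil] at hs
  simpa using hs

end Walk

variable {V : Type*}

/-- In a tree, any two paths between the same endpoints are equal. -/
lemma tree_path_eq' {T : SimpleGraph V} (hT : T.IsAcyclic) {u v : V}
    {p q : T.Walk u v} (hp : p.IsPath) (hq : q.IsPath) : p = q := by
  have := hT.path_unique ⟨p, hp⟩ ⟨q, hq⟩
  exact congrArg Subtype.val this

/-- In a tree, any path realizes the edistance. -/
lemma tree_path_length' {T : SimpleGraph V} (hT : T.IsTree) {u v : V}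
    {p : T.Walk u v} (hp : p.IsPath) : (p.length : ℕ∞) = T.edist u v := by
  refine le_antisymm ?_ (edist_le p)
  obtain ⟨q, hq⟩ := (hT.isConnected u v).exists_walk_length_eq_edist
  have : p = q.bypass := tree_path_eq' hT.IsAcyclic hp q.bypass_isPath
  rw [this, ← hq]
  exact_mod_cast q.length_bypass_le

/-- Vertices on a walk in `G.avoid x` starting away from `x` are not `x`. -/
lemma avoid_support_ne' {G : SimpleGraph V} {x u v : V} (p : (G.avoid x).Walk u v)
    (hu : u ≠ x) : ∀ z ∈ p.support, z ≠ x := by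
  induction p with
  | nil => simpa using hu
  | cons ha q ih =>
    intro z hz
    rcases List.mem_cons.mp (by simpa using hz) with rfl | hz'
    · exact hu
    · exact ih (avoid_adj'.mp ha).2.2 z hz'

/-- Split a walk at the first vertex belonging to `D`. -/
lemma exists_split' {H : SimpleGraph V} (D : Set V) {a b : V} (p : H.Walk a b)
    (hb : b ∈ D) :
    ∃ (c : V) (_ : c ∈ D) (P : H.Walk a c) (Q : H.Walk c b),
      p = P.append Q ∧ ∀ z ∈ P.support, z = c ∨ z ∉ D := by
  classical
  induction p with
  | nil => exact ⟨_, hb, Walk.nil, Walk.nil, rfl, by simp⟩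
  | cons ha q ih =>
    rename_i a₀ a₁ _
    by_cases hu : a₀ ∈ D
    · exact ⟨a₀, hu, Walk.nil, Walk.cons ha q, rfl, by simp⟩
    · obtain ⟨c, hc, P, Q, hPQ, hP⟩ := ih hb
      refine ⟨c, hc, Walk.cons ha P, Q, by rw [Walk.cons_append, hPQ], ?_⟩
      intro z hz
      rcases List.mem_cons.mp (by simpa using hz) with rfl | hz'
      · exact Or.inr hu
      · exact hP z hz'

end SimpleGraph

end Helpers

open SimpleGraph

/-- Lemma 3.1 of the paper: let `T` be a shortest-path tree of `G`
rooted at `r`, `x ≠ r`, `w` a child of `x` in `T`, and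
`D = {z : the tree path from r to z passes through w}` (the subtree hanging at `w`).
If `r` and `w` are connected in `G − x`, then some shortest `r`–`w` path `R` in
`G − x` splits at a vertex `c` so that the part before `c` stays outside `D ∪ {x}`
and is a shortest path between its endpoints in the subgraph induced on
`V \ (D ∪ {x})`, while the part from `c` onward stays inside `D`. -/
theorem stmt14 {V : Type*} [Fintype V] [DecidableEq V] (G : SimpleGraph V)
    (hG : G.Connected) (r : V) (T : SimpleGraph V) (hle : T ≤ G) (hT : T.IsTree)
    (hSPT : ∀ z : V, T.edist r z = G.edist r z)
    (x w : V) (hxr : x ≠ r) (hadj : T.Adj x w)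
    (hchild : ∀ p : T.Walk r w, p.IsPath → x ∈ p.support)
    (hconn : (G.avoid x).Reachable r w) :
    ∃ R : (G.avoid x).Walk r w, R.IsPath ∧ (R.length : ℕ∞) = davoid G r w x ∧
      ∃ c ∈ R.support,
        (∀ z ∈ R.support,
          (R.support.idxOf z < R.support.idxOf c →
            z ∉ {z' : V | ∀ p : T.Walk r z', p.IsPath → w ∈ p.support} ∧ z ≠ x) ∧
          (R.support.idxOf c ≤ R.support.idxOf z →
            z ∈ {z' : V | ∀ p : T.Walk r z', p.IsPath → w ∈ p.support})) ∧
        ∃ (b : V) (hb : b ∈ R.support),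
          R.support.idxOf b + 1 = R.support.idxOf c ∧
          ((R.takeUntil b hb).length : ℕ∞)
            = (G.avoidSet ({z' : V | ∀ p : T.Walk r z', p.IsPath → w ∈ p.support}
                ∪ {x})).edist r b := by
  classical
  set D : Set V := {z' : V | ∀ p : T.Walk r z', p.IsPath → w ∈ p.support} with hD
  have hrx : r ≠ x := hxr.symm
  have hwx : w ≠ x := hadj.ne'
  have htc : T.Connected := hT.isConnected
  have hac : T.IsAcyclic := hT.IsAcyclic
  have hpath : ∀ u v : V, ∃ p : T.Walk u v, p.IsPath := by
    intro u v
    obtain ⟨q⟩ := htc.preconnected u v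
    exact ⟨q.bypass, q.bypass_isPath⟩
  have hwD : w ∈ D := fun p _ => p.end_mem_support
  have hwr : w ≠ r := by
    intro h; subst h
    exact hxr (by simpa using hchild Walk.nil Walk.IsPath.nil)
  have hrD : r ∉ D := by
    intro h
    exact hwr (by simpa using h Walk.nil Walk.IsPath.nil)
  have hxw : x ≠ w := hadj.ne
  have hxD : x ∉ D := by
    intro hxmem
    obtain ⟨p₀, hp₀⟩ := hpath r w
    have hx0 : x ∈ p₀.support := hchild p₀ hp₀
    have hq : (p₀.takeUntil x hx0).IsPath := hp₀.takeUntil hx0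
    set q := p₀.takeUntil x hx0 with hqdef
    have hwq : w ∈ q.support := hxmem q hq
    have hq' : (q.takeUntil w hwq).IsPath := hq.takeUntil hwq
    have hxq' : x ∈ (q.takeUntil w hwq).support := hchild _ hq'
    have hsplit : q.support
        = (q.takeUntil w hwq).support ++ (q.dropUntil w hwq).support.tail := by
      conv_lhs => rw [← q.take_spec hwq]
      exact Walk.support_append _ _
    have hnodup : q.support.Nodup := hq.support_nodup
    rw [hsplit] at hnodup
    have hdisj := List.disjoint_of_nodup_append hnodup
    have hxtail : x ∈ (q.dropUntil w hwq).support.tail := by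
      have hxd : x ∈ (q.dropUntil w hwq).support := (q.dropUntil w hwq).end_mem_support
      rw [(q.dropUntil w hwq).support_eq_cons] at hxd
      rcases List.mem_cons.mp hxd with h | h
      · exact absurd h hxw
      · exact h
    exact hdisj hxq' hxtail
  have hclose : ∀ (c : V) (pc : T.Walk r c) (hpc : pc.IsPath) (hwc : w ∈ pc.support),
      ∀ z ∈ (pc.dropUntil w hwc).support, z ∈ D := by
    intro c pc hpc hwc z hz
    have hq1p : (pc.takeUntil w hwc).IsPath := hpc.takeUntil hwc
    have hdp : (pc.dropUntil w hwc).IsPath := hpc.dropUntil hwc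
    set q1 := pc.takeUntil w hwc with hq1
    set d := pc.dropUntil w hwc with hdd
    have hq2p : (d.takeUntil z hz).IsPath := hdp.takeUntil hz
    set q2 := d.takeUntil z hz with hq2
    have hpcsplit : pc.support = q1.support ++ d.support.tail := by
      conv_lhs => rw [← pc.take_spec hwc]
      exact Walk.support_append _ _
    have hpcnodup := hpc.support_nodup
    rw [hpcsplit] at hpcnodup
    have hdisj := List.disjoint_of_nodup_append hpcnodup
    have hq2tail_sub : q2.support.tail ⊆ d.support.tail := by
      intro y hy
      have hy1 : y ∈ q2.support := List.mem_of_mem_tail hy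
      have hy2 : y ∈ d.support := d.support_takeUntil_subset hz hy1
      have hyw : y ≠ w := by
        intro h; subst h
        have hnd := hq2p.support_nodup
        rw [q2.support_eq_cons] at hnd
        exact (List.nodup_cons.mp hnd).1 hy
      rw [d.support_eq_cons] at hy2
      rcases List.mem_cons.mp hy2 with h | h
      · exact absurd h hyw
      · exact h
    have hQ : (q1.append q2).IsPath := by
      rw [Walk.isPath_def, Walk.support_append]
      refine hq1p.support_nodup.append ?_ ?_
      · have := hq2p.support_nodup
        exact this.sublist (List.tail_sublist _)
      · intro y hy1 hy2
        exact hdisj hy1 (hq2tail_sub hy2)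
    intro p' hp'
    have hup : p' = q1.append q2 := tree_path_eq' hac hp' hQ
    rw [hup, Walk.mem_support_append_iff]
    exact Or.inl q1.end_mem_support
  -- a shortest r-w path in G.avoid x
  obtain ⟨R₀', hlen0⟩ := hconn.exists_walk_length_eq_edist
  have hR₀path : R₀'.bypass.IsPath := R₀'.bypass_isPath
  set R₀ := R₀'.bypass with hR0
  have hR₀len : (R₀.length : ℕ∞) = (G.avoid x).edist r w := by
    refine le_antisymm ?_ (edist_le _)
    rw [← hlen0]
    exact_mod_cast R₀'.length_bypass_le
  obtain ⟨c, hcD, P, Q, hPQ, hPcond⟩ := exists_split' D R₀ hwD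
  have hPpath : P.IsPath := by rw [hPQ] at hR₀path; exact hR₀path.of_append_left
  have hQpath : Q.IsPath := by rw [hPQ] at hR₀path; exact hR₀path.of_append_right
  have hcr : c ≠ r := fun h => hrD (h ▸ hcD)
  -- split off the last edge of P
  obtain ⟨b, hcb, q0, hq0⟩ := Walk.exists_eq_cons_of_ne hcr P.reverse
  have hP₁path : q0.reverse.IsPath := by
    have hrev : P.reverse.IsPath := hPpath.reverse
    rw [hq0] at hrev
    exact hrev.of_cons.reverse
  set P₁ : (G.avoid x).Walk r b := q0.reverse with hP₁def
  have hP1eq : P = P₁.append (Walk.cons hcb.symm Walk.nil) := by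
    have h := congrArg Walk.reverse hq0
    rw [Walk.reverse_reverse] at h
    rw [h, Walk.reverse_cons]
  have hPsupp : P.support = P₁.support ++ [c] := by
    rw [hP1eq, Walk.support_append]
    simp
  have hcP₁ : c ∉ P₁.support := by
    have hnd := hPpath.support_nodup
    rw [hPsupp] at hnd
    have hdisj := List.disjoint_of_nodup_append hnd
    intro h
    exact hdisj h (List.mem_singleton_self c)
  have hA : ∀ z ∈ P₁.support, z ∉ D ∧ z ≠ x := by
    intro z hz
    have hzP : z ∈ P.support := by rw [hPsupp]; exact List.mem_append_left _ hz
    have hzx : z ≠ x := avoid_support_ne' P hrx z hzP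
    have hzc : z ≠ c := fun h => hcP₁ (h ▸ hz)
    rcases hPcond z hzP with h | h
    · exact absurd h hzc
    · exact ⟨h, hzx⟩
  -- tree path to c and the suffix S inside D
  obtain ⟨pc, hpc⟩ := hpath r c
  have hwc : w ∈ pc.support := hcD pc hpc
  have hS₀path : (pc.dropUntil w hwc).IsPath := hpc.dropUntil hwc
  set S₀ := pc.dropUntil w hwc with hS₀
  have hS₀D : ∀ z ∈ S₀.support, z ∈ D := hclose c pc hpc hwc
  have htSpath : S₀.reverse.IsPath := hS₀path.reverse
  set tS := S₀.reverse with htS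
  have htSD : ∀ z ∈ tS.support, z ∈ D := by
    intro z hz
    apply hS₀D
    rwa [htS, Walk.support_reverse, List.mem_reverse] at hz
  have hedges : ∀ e ∈ tS.edges, e ∈ (G.avoid x).edgeSet := by
    intro e
    induction e using Sym2.ind with
    | _ a₁ a₂ =>
      intro he
      have h1 : a₁ ∈ tS.support := tS.fst_mem_support_of_mem_edges he
      have h2 : a₂ ∈ tS.support := tS.snd_mem_support_of_mem_edges he
      have hadj' : T.Adj a₁ a₂ := tS.adj_of_mem_edges he
      rw [mem_edgeSet]
      exact avoid_adj'.mpr ⟨hle hadj', fun h => hxD (h ▸ htSD a₁ h1), fun h => hxD (h ▸ htSD a₂ h2)⟩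
  set S : (G.avoid x).Walk c w := tS.transfer (G.avoid x) hedges with hSdef
  have hSpath : S.IsPath := by
    rw [Walk.isPath_def, hSdef, Walk.support_transfer]
    exact htSpath.support_nodup
  have hSD : ∀ z ∈ S.support, z ∈ D := by
    intro z hz
    apply htSD
    rwa [hSdef, Walk.support_transfer] at hz
  -- length accounting
  have hlen_pc : pc.length = (pc.takeUntil w hwc).length + S₀.length := by
    conv_lhs => rw [← pc.take_spec hwc]
    exact Walk.length_append _ _
  have hlen_q1 : (((pc.takeUntil w hwc)).length : ℕ∞) = G.edist r w := by
    rw [tree_path_length' hT (hpc.takeUntil hwc)]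
    exact hSPT w
  have hlen_pcE : (pc.length : ℕ∞) = G.edist r c := by
    rw [tree_path_length' hT hpc]
    exact hSPT c
  obtain ⟨k, hk⟩ : ∃ k : ℕ, G.edist r w = (k : ℕ∞) :=
    ⟨(G.edist r w).toNat, (ENat.coe_toNat (by
      rw [edist_ne_top_iff_reachable]; exact hG.preconnected r w)).symm⟩
  have hq1k : (pc.takeUntil w hwc).length = k := by exact_mod_cast hlen_q1.trans hk
  have havoidle : G.avoid x ≤ G := fun a b h => (avoid_adj'.mp h).1
  have htri : G.edist r c ≤ G.edist r w + (Q.length : ℕ∞) := by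
    calc G.edist r c ≤ G.edist r w + G.edist w c := G.edist_triangle
    _ ≤ G.edist r w + (Q.length : ℕ∞) := by
        have h1 : G.edist w c ≤ (G.avoid x).edist w c := edist_anti havoidle
        have h2 : (G.avoid x).edist w c ≤ (Q.length : ℕ∞) := by
          rw [SimpleGraph.edist_comm]; exact edist_le Q
        exact add_le_add le_rfl (h1.trans h2)
  have hpc_le : pc.length ≤ k + Q.length := by
    have h3 : (pc.length : ℕ∞) ≤ ((k + Q.length : ℕ) : ℕ∞) := by
      rw [hlen_pcE]
      push_cast
      rw [← hk]
      exact htri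
    exact_mod_cast h3
  have hSlen : S.length = S₀.length := by
    rw [hSdef, Walk.length_transfer, htS, Walk.length_reverse]
  have hSle : S.length ≤ Q.length := by omega
  -- the final walk R
  have hbc' : (G.avoid x).Adj b c := hcb.symm
  set R : (G.avoid x).Walk r w := P₁.append (Walk.cons hbc' S) with hRdef
  have hRsupp : R.support = P₁.support ++ S.support := by
    rw [hRdef, Walk.support_append, Walk.support_cons, List.tail_cons]
  have hdisjAB : ∀ z ∈ P₁.support, z ∈ S.support → False :=
    fun z hz1 hz2 => (hA z hz1).1 (hSD z hz2)
  have hRpath : R.IsPath := by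
    rw [Walk.isPath_def, hRsupp]
    exact hP₁path.support_nodup.append hSpath.support_nodup hdisjAB
  have hRlen : R.length = P₁.length + S.length + 1 := by
    rw [hRdef, Walk.length_append, Walk.length_cons]
    omega
  have hR₀lenN : R₀.length = (P₁.length + 1) + Q.length := by
    rw [hPQ, Walk.length_append, hP1eq, Walk.length_append]
    simp [Walk.length_cons]
  have hRshort : (R.length : ℕ∞) = (G.avoid x).edist r w := by
    refine le_antisymm ?_ (edist_le _)
    rw [← hR₀len]
    exact_mod_cast (by omega : R.length ≤ R₀.length)
  have hcR : c ∈ R.support := by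
    rw [hRsupp]; exact List.mem_append_right _ S.start_mem_support
  have hidxc : R.support.idxOf c = P₁.support.length := by
    rw [hRsupp, List.idxOf_append_of_notMem hcP₁]
    conv_lhs => rw [S.support_eq_cons]
    rw [List.idxOf_cons_self]
    omega
  have hbP₁ : b ∈ P₁.support := P₁.end_mem_support
  have hbR : b ∈ R.support := by
    rw [hRsupp]; exact List.mem_append_left _ hbP₁
  have hlastb : P₁.support.getLast (by simp) = b := P₁.getLast_support
  have hsplitA : P₁.support = P₁.support.dropLast ++ [b] := by
    conv_lhs => rw [← List.dropLast_append_getLast (P₁.support_ne_nil), hlastb]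
  have hbnotdrop : b ∉ P₁.support.dropLast := by
    have hnd := hP₁path.support_nodup
    rw [hsplitA] at hnd
    have hdisj := List.disjoint_of_nodup_append hnd
    intro hmem
    exact hdisj hmem (List.mem_singleton_self b)
  have hAlen : P₁.support.length = P₁.length + 1 := P₁.length_support
  have hdroplen : P₁.support.dropLast.length = P₁.length := by
    rw [List.length_dropLast, hAlen]
    omega
  have hidxb : R.support.idxOf b = P₁.length := by
    rw [hRsupp, List.idxOf_append_of_mem hbP₁]
    conv_lhs => rw [hsplitA]
    rw [List.idxOf_append_of_notMem hbnotdrop, List.idxOf_cons_self, hdroplen]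
    omega
  have hidxcb : R.support.idxOf b + 1 = R.support.idxOf c := by
    rw [hidxb, hidxc, hAlen]
  refine ⟨R, hRpath, ?_, c, hcR, ?_, b, hbR, hidxcb, ?_⟩
  · have hdav : davoid G r w x = (G.avoid x).edist r w := by
      unfold davoid
      rw [if_neg]
      push_neg
      exact ⟨hrx, hwx⟩
    rw [hdav]
    exact hRshort
  · intro z hz
    rw [hRsupp] at hz
    rcases List.mem_append.mp hz with hzA | hzB
    · have hidxz : R.support.idxOf z < P₁.support.length := by
        rw [hRsupp, List.idxOf_append_of_mem hzA]
        exact List.idxOf_lt_length_iff.mpr hzA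
      constructor
      · intro _
        exact hA z hzA
      · intro hij
        rw [hidxc] at hij
        omega
    · have hzD : z ∈ D := hSD z hzB
      have hzA' : z ∉ P₁.support := fun h => (hA z h).1 hzD
      have hidxz : P₁.support.length ≤ R.support.idxOf z := by
        rw [hRsupp, List.idxOf_append_of_notMem hzA']
        omega
      constructor
      · intro hlt
        rw [hidxc] at hlt
        omega
      · intro _
        exact hzD
  · have htake : R.takeUntil b hbR = P₁ := by
      have h1 : R.takeUntil b hbR = P₁.takeUntil b hbP₁ :=
        Walk.takeUntil_append_left' (Walk.cons hbc' S) hbP₁ hbR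
      rw [h1, Walk.takeUntil_end' P₁ hP₁path]
    rw [htake]
    have hedges₁ : ∀ e ∈ P₁.edges, e ∈ (G.avoidSet (D ∪ {x})).edgeSet := by
      intro e
      induction e using Sym2.ind with
      | _ a₁ a₂ =>
        intro he
        have h1 := hA a₁ (P₁.fst_mem_support_of_mem_edges he)
        have h2 := hA a₂ (P₁.snd_mem_support_of_mem_edges he)
        have hadj2 : (G.avoid x).Adj a₁ a₂ := P₁.adj_of_mem_edges he
        rw [mem_edgeSet]
        refine avoidSet_adj'.mpr ⟨(avoid_adj'.mp hadj2).1, ?_, ?_⟩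
        · rintro (h | h)
          · exact h1.1 h
          · exact h1.2 h
        · rintro (h | h)
          · exact h2.1 h
          · exact h2.2 h
    have hle1 : (G.avoidSet (D ∪ {x})).edist r b ≤ (P₁.length : ℕ∞) := by
      have h := edist_le (P₁.transfer (G.avoidSet (D ∪ {x})) hedges₁)
      rwa [Walk.length_transfer] at h
    refine le_antisymm ?_ hle1
    have hne : (G.avoidSet (D ∪ {x})).edist r b ≠ ⊤ := by
      intro h
      rw [h] at hle1
      simp at hle1
    obtain ⟨W, hW⟩ := exists_walk_of_edist_ne_top hne
    have hedges₂ : ∀ e ∈ W.edges, e ∈ (G.avoid x).edgeSet := by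
      intro e
      induction e using Sym2.ind with
      | _ a₁ a₂ =>
        intro he
        have hadj2 : (G.avoidSet (D ∪ {x})).Adj a₁ a₂ := W.adj_of_mem_edges he
        rw [mem_edgeSet]
        exact avoid_adj'.mpr ⟨(avoidSet_adj'.mp hadj2).1,
          fun h => (avoidSet_adj'.mp hadj2).2.1 (Set.mem_union_right _ (by simp [h])),
          fun h => (avoidSet_adj'.mp hadj2).2.2 (Set.mem_union_right _ (by simp [h]))⟩
    have hfull := edist_le ((W.transfer (G.avoid x) hedges₂).append (Walk.cons hbc' S))
    have hlenfull : ((W.transfer (G.avoid x) hedges₂).append (Walk.cons hbc' S)).length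
        = W.length + (S.length + 1) := by
      rw [Walk.length_append, Walk.length_transfer, Walk.length_cons]
    have h5 : (R.length : ℕ∞) ≤ ((W.length + (S.length + 1) : ℕ) : ℕ∞) := by
      rw [hRshort, ← hlenfull]
      exact hfull
    have h6 : R.length ≤ W.length + (S.length + 1) := by exact_mod_cast h5
    have h7 : P₁.length ≤ W.length := by omega
    rw [← hW]
    exact_mod_cast h7
end
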